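/- Consider an urban planning instance with opt > 0, set h_i = max_{t ∈ [0,u_i]} f_i(t) and φ = (√5 − 1)/2, and suppose the locations are ordered so that h_1 ≥ h_2 ≥ ⋯ ≥ h_n. Assume there is no critical location, i.e. u_i·h_i < φ·opt for every i. Let k* = min{k : Σ_{i=1}^{k} u_i·h_i ≥ opt} (which exists since Σ_{i=1}^n u_i·h_i ≥ opt). For ε ∈ (0,1], define g_i(t) = max(f_i(t), ε·h_i) for i ≤ k* and g_i = f_i for i > k*. Then the cost Σ_i ∫_0^{u_i} (g_i(t) − f_i(t)) dt is at most ((1+φ)/2)·ε²·opt ≤ 0.81·ε²·opt, and every Nash equilibrium x of the modified instance satisfies Σ_i x_i·g_i(x_i) ≥ ε·opt. -/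

import Mathlib

open MeasureTheory intervalIntegral

lemma aux_half (b h ε : ℝ) (hb : 0 < b) (hh : 0 ≤ h) (hε0 : 0 < ε) (hε1 : ε ≤ 1)
    (f : ℝ → ℝ) (hf : ContinuousOn f (Set.Icc 0 b))
    (hlb : ∀ t ∈ Set.Icc 0 b, t / b * h ≤ f t) :
    ∫ t in (0:ℝ)..b, (max (f t) (ε * h) - f t) ≤ ε ^ 2 * h * b / 2 := by
  set s := ε * b with hs
  have hs0 : 0 ≤ s := by positivity
  have hsb : s ≤ b := by nlinarith
  have hGc : ContinuousOn (fun t => max (f t) (ε * h) - f t) (Set.Icc 0 b) :=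
    (hf.sup continuousOn_const).sub hf
  have hI1 : IntervalIntegrable (fun t => max (f t) (ε * h) - f t) volume 0 s := by
    apply ContinuousOn.intervalIntegrable
    apply hGc.mono
    rw [Set.uIcc_of_le hs0]
    exact Set.Icc_subset_Icc le_rfl hsb
  have hI2 : IntervalIntegrable (fun t => max (f t) (ε * h) - f t) volume s b := by
    apply ContinuousOn.intervalIntegrable
    apply hGc.mono
    rw [Set.uIcc_of_le hsb]
    exact Set.Icc_subset_Icc hs0 le_rfl
  have hsplit : (∫ t in (0:ℝ)..b, (max (f t) (ε * h) - f t))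
      = (∫ t in (0:ℝ)..s, (max (f t) (ε * h) - f t)) + ∫ t in s..b, (max (f t) (ε * h) - f t) :=
    (intervalIntegral.integral_add_adjacent_intervals hI1 hI2).symm
  have hzero : (∫ t in s..b, (max (f t) (ε * h) - f t)) = 0 := by
    have heq : Set.EqOn (fun t => max (f t) (ε * h) - f t) (fun _ => (0:ℝ)) (Set.uIcc s b) := by
      intro t ht
      rw [Set.uIcc_of_le hsb] at ht
      have ht' : t ∈ Set.Icc 0 b := ⟨le_trans hs0 ht.1, ht.2⟩
      have h2 : ε * h ≤ t / b * h := by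
        apply mul_le_mul_of_nonneg_right _ hh
        rw [le_div_iff₀ hb]
        linarith [ht.1]
      have h1 : ε * h ≤ f t := le_trans h2 (hlb t ht')
      simp only [max_eq_left h1, sub_self]
    rw [intervalIntegral.integral_congr heq]
    simp
  have hmono : (∫ t in (0:ℝ)..s, (max (f t) (ε * h) - f t))
      ≤ ∫ t in (0:ℝ)..s, (ε * h - t * (h / b)) := by
    apply intervalIntegral.integral_mono_on hs0 hI1
    · exact (continuous_const.sub (continuous_id.mul continuous_const)).intervalIntegrable _ _
    · intro t ht
      have htb : t ∈ Set.Icc 0 b := ⟨ht.1, le_trans ht.2 hsb⟩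
      have hlb' := hlb t htb
      have hts : t * (h / b) ≤ ε * h := by
        have h1 : t * (h / b) ≤ s * (h / b) := by
          apply mul_le_mul_of_nonneg_right ht.2
          positivity
        have h2 : s * (h / b) = ε * h := by
          rw [hs]; field_simp
        linarith
      rcases le_total (f t) (ε * h) with hc | hc
      · rw [max_eq_right hc]
        have : t / b * h = t * (h / b) := by ring
        linarith
      · rw [max_eq_left hc]
        simp only [sub_self]
        linarith
  have e2 : (∫ t in (0:ℝ)..s, t * (h / b)) = s ^ 2 / 2 * (h / b) := by
    rw [intervalIntegral.integral_mul_const, integral_id]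
    ring
  have hcalc : (∫ t in (0:ℝ)..s, (ε * h - t * (h / b))) = ε ^ 2 * h * b / 2 := by
    rw [intervalIntegral.integral_sub (f := fun _ => ε * h) (g := fun t => t * (h / b)) (intervalIntegrable_const)
      (((continuous_id'.mul continuous_const)).intervalIntegrable _ _), e2,
      intervalIntegral.integral_const, smul_eq_mul, hs]
    field_simp
    ring
  rw [hsplit, hzero, add_zero]
  linarith

lemma aux_full (uu hm ε : ℝ) (hu : 0 < uu) (hε0 : 0 < ε) (hε1 : ε ≤ 1)
    (f : ℝ → ℝ) (hcont : ContinuousOn f (Set.Icc 0 uu))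
    (hnn : ∀ t ∈ Set.Icc 0 uu, 0 ≤ f t)
    (hconc : ConcaveOn ℝ (Set.Icc 0 uu) f)
    (hgr : IsGreatest (f '' Set.Icc 0 uu) hm) :
    (∫ t in (0:ℝ)..uu, (max (f t) (ε * hm) - f t)) ≤ ε ^ 2 * uu * hm / 2 := by
  obtain ⟨t0, ht0, hft0⟩ := hgr.1
  have hm0 : 0 ≤ hm := hft0 ▸ hnn t0 ht0
  have h0mem : (0:ℝ) ∈ Set.Icc 0 uu := ⟨le_rfl, le_of_lt hu⟩
  have humem : uu ∈ Set.Icc 0 uu := ⟨le_of_lt hu, le_rfl⟩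
  have hGc : ContinuousOn (fun t => max (f t) (ε * hm) - f t) (Set.Icc 0 uu) :=
    (hcont.sup continuousOn_const).sub hcont
  have hI1 : IntervalIntegrable (fun t => max (f t) (ε * hm) - f t) volume 0 t0 := by
    apply ContinuousOn.intervalIntegrable
    apply hGc.mono
    rw [Set.uIcc_of_le ht0.1]
    exact Set.Icc_subset_Icc le_rfl ht0.2
  have hI2 : IntervalIntegrable (fun t => max (f t) (ε * hm) - f t) volume t0 uu := by
    apply ContinuousOn.intervalIntegrable
    apply hGc.mono
    rw [Set.uIcc_of_le ht0.2]
    exact Set.Icc_subset_Icc ht0.1 le_rfl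
  rw [← intervalIntegral.integral_add_adjacent_intervals hI1 hI2]
  have hleft : (∫ t in (0:ℝ)..t0, (max (f t) (ε * hm) - f t)) ≤ ε ^ 2 * hm * t0 / 2 := by
    rcases eq_or_lt_of_le ht0.1 with he | hlt
    · rw [← he]
      simp
    · apply aux_half t0 hm ε hlt hm0 hε0 hε1 f
        (hcont.mono (Set.Icc_subset_Icc le_rfl ht0.2))
      intro t ht
      have ha : 0 ≤ 1 - t / t0 := by
        rw [sub_nonneg, div_le_one hlt]
        exact ht.2
      have hb : 0 ≤ t / t0 := div_nonneg ht.1 (le_of_lt hlt)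
      have key := hconc.2 h0mem (⟨ht0.1, ht0.2⟩ : t0 ∈ Set.Icc 0 uu) ha hb (by ring)
      simp only [smul_eq_mul, mul_zero, zero_add] at key
      have harg : t / t0 * t0 = t := by field_simp
      rw [harg] at key
      have hf0 : 0 ≤ f 0 := hnn 0 h0mem
      calc t / t0 * hm = t / t0 * f t0 := by rw [hft0]
        _ ≤ (1 - t / t0) * f 0 + t / t0 * f t0 := by nlinarith
        _ ≤ f t := key
  have hright : (∫ t in t0..uu, (max (f t) (ε * hm) - f t)) ≤ ε ^ 2 * hm * (uu - t0) / 2 := by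
    rcases eq_or_lt_of_le ht0.2 with he | hlt
    · rw [he]
      simp
    · have hcomp := intervalIntegral.integral_comp_sub_left
        (a := 0) (b := uu - t0) (fun t => max (f t) (ε * hm) - f t) uu
      have hb' : 0 < uu - t0 := by linarith
      have key := aux_half (uu - t0) hm ε hb' hm0 hε0 hε1 (fun s => f (uu - s))
        ?_ ?_
      · rw [hcomp] at key
        simp only [sub_zero, sub_sub_cancel] at key
        convert key using 2
      · apply hcont.comp (continuous_const.sub continuous_id).continuousOn
        intro s hs
        obtain ⟨hs1, hs2⟩ := hs
        simp only [Pi.sub_apply, id_eq]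
        exact ⟨by linarith [ht0.1], by linarith⟩
      · intro s hs
        obtain ⟨hs1, hs2⟩ := hs
        show s / (uu - t0) * hm ≤ f (uu - s)
        have hw1 : 0 ≤ s / (uu - t0) := div_nonneg hs1 hb'.le
        have hw2 : 0 ≤ (uu - s - t0) / (uu - t0) := div_nonneg (by linarith) hb'.le
        have hsum : s / (uu - t0) + (uu - s - t0) / (uu - t0) = 1 := by
          field_simp
          ring
        have key2 := hconc.2 (⟨ht0.1, ht0.2⟩ : t0 ∈ Set.Icc 0 uu) humem hw1 hw2 hsum
        simp only [smul_eq_mul] at key2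
        have harg : s / (uu - t0) * t0 + (uu - s - t0) / (uu - t0) * uu = uu - s := by
          field_simp
          ring
        rw [harg] at key2
        have hfu : 0 ≤ f uu := hnn uu humem
        calc s / (uu - t0) * hm = s / (uu - t0) * f t0 := by rw [hft0]
          _ ≤ s / (uu - t0) * f t0 + (uu - s - t0) / (uu - t0) * f uu := by nlinarith
          _ ≤ f (uu - s) := key2
  nlinarith [hleft, hright]

lemma sum_split {M : Type*} [AddCommMonoid M] (f : ℕ → M) {m n : ℕ} (h : m ≤ n) :
    ∑ i ∈ Finset.range n, f i = (∑ i ∈ Finset.range m, f i) + ∑ i ∈ Finset.Ico m n, f i := by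
  rw [Finset.range_eq_Ico, Finset.range_eq_Ico]
  exact (Finset.sum_Ico_consecutive (f := f) (Nat.zero_le _) h).symm

/-- If no location is critical (`u_i·h_i < φ·opt` for all `i`, with the
locations sorted so that `h_1 ≥ ⋯ ≥ h_n`), then raising `f_i` to target `ε·h_i` for the
first `k*` locations (where `k*` is minimal with `∑_{i≤k*} u_i·h_i ≥ opt`) costs at most
`((1+φ)/2)·ε²·opt ≤ 0.81·ε²·opt`, and every Nash equilibrium of the modified instance has
welfare at least `ε·opt`. (Locations are indexed `0,…,n-1`.) -/
theorem no_critical_location_case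
    (n : ℕ) (u : ℕ → ℝ) (hu : ∀ i < n, 0 < u i)
    (f : ℕ → ℝ → ℝ)
    (hf_nonneg : ∀ i < n, ∀ t ∈ Set.Icc 0 (u i), 0 ≤ f i t)
    (hf_cont : ∀ i < n, ContinuousOn (f i) (Set.Icc 0 (u i)))
    (hf_conc : ∀ i < n, ConcaveOn ℝ (Set.Icc 0 (u i)) (f i))
    (N : ℝ) (hN_lo : ∀ i < n, u i ≤ N) (hN_hi : N ≤ ∑ i ∈ Finset.range n, u i)
    (opt : ℝ)
    (hopt : IsGreatest {w : ℝ | ∃ x : ℕ → ℝ,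
      (∀ i < n, x i ∈ Set.Icc 0 (u i)) ∧ (∑ i ∈ Finset.range n, x i) = N ∧
      w = ∑ i ∈ Finset.range n, x i * f i (x i)} opt)
    (hopt_pos : 0 < opt)
    (h : ℕ → ℝ) (hh : ∀ i < n, IsGreatest (f i '' Set.Icc 0 (u i)) (h i))
    (hsorted : ∀ i j, i ≤ j → j < n → h j ≤ h i)
    (φ : ℝ) (hφ : φ = (Real.sqrt 5 - 1) / 2)
    (hnocrit : ∀ i < n, u i * h i < φ * opt)
    (kstar : ℕ)
    (hkstar : IsLeast {k | k ≤ n ∧ opt ≤ ∑ i ∈ Finset.range k, u i * h i} kstar)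
    (ε : ℝ) (hε : ε ∈ Set.Ioc (0 : ℝ) 1)
    (g : ℕ → ℝ → ℝ)
    (hg_low : ∀ i < kstar, ∀ t, g i t = max (f i t) (ε * h i))
    (hg_high : ∀ i, kstar ≤ i → g i = f i) :
    ((∑ i ∈ Finset.range n, ∫ t in (0 : ℝ)..(u i), (g i t - f i t)) ≤
        (1 + φ) / 2 * ε ^ 2 * opt ∧
      (1 + φ) / 2 * ε ^ 2 * opt ≤ 0.81 * ε ^ 2 * opt) ∧
    (∀ x : ℕ → ℝ,
      (∀ i < n, x i ∈ Set.Icc 0 (u i)) → (∑ i ∈ Finset.range n, x i) = N →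
      (∀ i < n, ∀ j < n, 0 < x i → x j < u j → g j (x j) ≤ g i (x i)) →
      ε * opt ≤ ∑ i ∈ Finset.range n, x i * g i (x i)) := by
  obtain ⟨⟨hk_le_n, hk_opt⟩, hk_min⟩ := hkstar
  obtain ⟨hε0, hε1⟩ := hε
  have hh_nonneg : ∀ i < n, 0 ≤ h i := by
    intro i hi
    obtain ⟨t, ht, hft⟩ := (hh i hi).1
    exact hft ▸ hf_nonneg i hi t ht
  have hk_pos : 0 < kstar := by
    rcases Nat.eq_zero_or_pos kstar with h0 | h0
    · rw [h0] at hk_opt; simp at hk_opt; linarith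
    · exact h0
  have hsum_lt : ∑ i ∈ Finset.range kstar, u i * h i < (1 + φ) * opt := by
    have h2 : ∑ i ∈ Finset.range (kstar - 1), u i * h i < opt := by
      by_contra hc
      push_neg at hc
      have : kstar ≤ kstar - 1 := hk_min ⟨by omega, hc⟩
      omega
    have h3 : u (kstar - 1) * h (kstar - 1) < φ * opt := hnocrit _ (by omega)
    have h4 : ∑ i ∈ Finset.range kstar, u i * h i
        = ∑ i ∈ Finset.range (kstar - 1), u i * h i + u (kstar - 1) * h (kstar - 1) := by
      conv_lhs => rw [show kstar = (kstar - 1) + 1 by omega]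
      rw [Finset.sum_range_succ]
    linarith
  have cost_i : ∀ i ∈ Finset.range kstar,
      (∫ t in (0:ℝ)..(u i), (g i t - f i t)) ≤ ε ^ 2 * u i * h i / 2 := by
    intro i hi
    rw [Finset.mem_range] at hi
    have hin : i < n := lt_of_lt_of_le hi hk_le_n
    have heq : (∫ t in (0:ℝ)..(u i), (g i t - f i t))
        = ∫ t in (0:ℝ)..(u i), (max (f i t) (ε * h i) - f i t) := by
      apply intervalIntegral.integral_congr
      intro t _
      simp only [hg_low i hi t]
    rw [heq]
    exact aux_full (u i) (h i) ε (hu i hin) hε0 hε1 (f i) (hf_cont i hin)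
      (hf_nonneg i hin) (hf_conc i hin) (hh i hin)
  have cost1 : (∑ i ∈ Finset.range n, ∫ t in (0:ℝ)..(u i), (g i t - f i t))
      ≤ (1 + φ) / 2 * ε ^ 2 * opt := by
    have hz : ∀ i ∈ Finset.Ico kstar n, (∫ t in (0:ℝ)..(u i), (g i t - f i t)) = 0 := by
      intro i hi
      rw [hg_high i (Finset.mem_Ico.mp hi).1]
      simp
    have hB : ∑ i ∈ Finset.range kstar, ε ^ 2 * u i * h i / 2
        = ε ^ 2 / 2 * ∑ i ∈ Finset.range kstar, u i * h i := by
      rw [Finset.mul_sum]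
      apply Finset.sum_congr rfl
      intros
      ring
    have hεsq : (0:ℝ) ≤ ε ^ 2 / 2 := by positivity
    calc (∑ i ∈ Finset.range n, ∫ t in (0:ℝ)..(u i), (g i t - f i t))
        = (∑ i ∈ Finset.range kstar, ∫ t in (0:ℝ)..(u i), (g i t - f i t))
          + ∑ i ∈ Finset.Ico kstar n, ∫ t in (0:ℝ)..(u i), (g i t - f i t) :=
          sum_split _ hk_le_n
      _ = ∑ i ∈ Finset.range kstar, ∫ t in (0:ℝ)..(u i), (g i t - f i t) := by
          rw [Finset.sum_eq_zero hz, add_zero]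
      _ ≤ ∑ i ∈ Finset.range kstar, ε ^ 2 * u i * h i / 2 := Finset.sum_le_sum cost_i
      _ = ε ^ 2 / 2 * ∑ i ∈ Finset.range kstar, u i * h i := hB
      _ ≤ ε ^ 2 / 2 * ((1 + φ) * opt) := mul_le_mul_of_nonneg_left hsum_lt.le hεsq
      _ = (1 + φ) / 2 * ε ^ 2 * opt := by ring
  have cost2 : (1 + φ) / 2 * ε ^ 2 * opt ≤ 0.81 * ε ^ 2 * opt := by
    have h5 : Real.sqrt 5 ≤ 2.24 := by
      nlinarith [Real.sq_sqrt (show (0:ℝ) ≤ 5 by norm_num), Real.sqrt_nonneg 5]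
    have hφle : (1 + φ) / 2 ≤ 0.81 := by rw [hφ]; linarith
    have hpos : (0:ℝ) ≤ ε ^ 2 * opt := by positivity
    calc (1 + φ) / 2 * ε ^ 2 * opt = (1 + φ) / 2 * (ε ^ 2 * opt) := by ring
      _ ≤ 0.81 * (ε ^ 2 * opt) := mul_le_mul_of_nonneg_right hφle hpos
      _ = 0.81 * ε ^ 2 * opt := by ring
  refine ⟨⟨cost1, cost2⟩, ?_⟩
  intro x hx hxN hnash
  have hgeps : ∀ i < kstar, ∀ t, ε * h i ≤ g i t := by
    intro i hi t
    rw [hg_low i hi t]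
    exact le_max_right _ _
  by_cases hfull : ∀ i < kstar, x i = u i
  · have hA : ∀ i ∈ Finset.range kstar, ε * (u i * h i) ≤ x i * g i (x i) := by
      intro i hi
      rw [Finset.mem_range] at hi
      have hin : i < n := lt_of_lt_of_le hi hk_le_n
      rw [hfull i hi]
      calc ε * (u i * h i) = u i * (ε * h i) := by ring
        _ ≤ u i * g i (u i) := mul_le_mul_of_nonneg_left (hgeps i hi _) (hu i hin).le
    have h1 : ε * opt ≤ ∑ i ∈ Finset.range kstar, x i * g i (x i) := by
      calc ε * opt ≤ ε * ∑ i ∈ Finset.range kstar, u i * h i :=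
            mul_le_mul_of_nonneg_left hk_opt hε0.le
        _ = ∑ i ∈ Finset.range kstar, ε * (u i * h i) := Finset.mul_sum _ _ _
        _ ≤ _ := Finset.sum_le_sum hA
    have h2 : ∑ i ∈ Finset.range kstar, x i * g i (x i)
        ≤ ∑ i ∈ Finset.range n, x i * g i (x i) := by
      apply Finset.sum_le_sum_of_subset_of_nonneg (Finset.range_subset_range.mpr hk_le_n)
      intro i hi hni
      rw [Finset.mem_range] at hi hni
      have hik : kstar ≤ i := by omega
      rw [hg_high i hik]
      exact mul_nonneg (hx i hi).1 (hf_nonneg i hi _ (hx i hi))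
    linarith
  · push_neg at hfull
    classical
    obtain ⟨j, ⟨hjk, hjne⟩, hjmin⟩ := Nat.lt_wfRel.wf.has_min {j | j < kstar ∧ x j ≠ u j} hfull
    have hjn : j < n := lt_of_lt_of_le hjk hk_le_n
    have hjlt : x j < u j := lt_of_le_of_ne (hx j hjn).2 hjne
    have hjle : j ≤ n := hjn.le
    have hfull' : ∀ i < j, x i = u i := by
      intro i hij
      by_contra hc
      exact hjmin i ⟨lt_trans hij hjk, hc⟩ hij
    have hj0 : 0 ≤ h j := hh_nonneg j hjn
    -- opt upper bound
    obtain ⟨y, hy_mem, hy_sum, hy_w⟩ := hopt.1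
    have s1 : opt ≤ ∑ i ∈ Finset.range n, y i * h i := by
      rw [hy_w]
      apply Finset.sum_le_sum
      intro i hi
      rw [Finset.mem_range] at hi
      exact mul_le_mul_of_nonneg_left ((hh i hi).2 ⟨y i, hy_mem i hi, rfl⟩) (hy_mem i hi).1
    have s2 : ∑ i ∈ Finset.range n, y i * h i
        = ∑ i ∈ Finset.range j, y i * h i + ∑ i ∈ Finset.Ico j n, y i * h i :=
      sum_split _ hjle
    have s3 : ∑ i ∈ Finset.Ico j n, y i * h i ≤ h j * ∑ i ∈ Finset.Ico j n, y i := by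
      rw [Finset.mul_sum]
      apply Finset.sum_le_sum
      intro i hi
      rw [Finset.mem_Ico] at hi
      have hji : h i ≤ h j := hsorted j i hi.1 hi.2
      have hy0 : 0 ≤ y i := (hy_mem i hi.2).1
      nlinarith
    have s4 : ∑ i ∈ Finset.range j, y i * h i
        ≤ ∑ i ∈ Finset.range j, (u i * h i - (u i - y i) * h j) := by
      apply Finset.sum_le_sum
      intro i hi
      rw [Finset.mem_range] at hi
      have hin : i < n := lt_trans hi hjn
      have hji : h j ≤ h i := hsorted i j hi.le hjn
      have hyu : y i ≤ u i := (hy_mem i hin).2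
      nlinarith
    have s5 : ∑ i ∈ Finset.range j, (u i * h i - (u i - y i) * h j)
        = ∑ i ∈ Finset.range j, u i * h i - h j * ∑ i ∈ Finset.range j, u i
          + h j * ∑ i ∈ Finset.range j, y i := by
      rw [Finset.mul_sum, Finset.mul_sum, ← Finset.sum_sub_distrib, ← Finset.sum_add_distrib]
      apply Finset.sum_congr rfl
      intros
      ring
    have s6 : ∑ i ∈ Finset.Ico j n, y i = N - ∑ i ∈ Finset.range j, y i := by
      have := sum_split y hjle
      linarith [hy_sum, this]
    have s6' : h j * ∑ i ∈ Finset.Ico j n, y i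
        = h j * N - h j * ∑ i ∈ Finset.range j, y i := by
      rw [s6]; ring
    have s7 : ∑ i ∈ Finset.Ico j n, x i = N - ∑ i ∈ Finset.range j, u i := by
      have hsp := sum_split x hjle
      have : ∑ i ∈ Finset.range j, x i = ∑ i ∈ Finset.range j, u i := by
        apply Finset.sum_congr rfl
        intro i hi
        exact hfull' i (Finset.mem_range.mp hi)
      rw [this] at hsp
      linarith [hxN]
    have s7' : h j * ∑ i ∈ Finset.Ico j n, x i
        = h j * N - h j * ∑ i ∈ Finset.range j, u i := by
      rw [s7]; ring
    have opt_le : opt ≤ ∑ i ∈ Finset.range j, u i * h i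
        + h j * ∑ i ∈ Finset.Ico j n, x i := by
      linarith [s1, s2, s3, s4, s5, s6', s7']
    -- welfare lower bound
    have w1 : ∑ i ∈ Finset.range n, x i * g i (x i)
        = ∑ i ∈ Finset.range j, x i * g i (x i) + ∑ i ∈ Finset.Ico j n, x i * g i (x i) :=
      sum_split _ hjle
    have w4 : ε * ∑ i ∈ Finset.range j, u i * h i
        ≤ ∑ i ∈ Finset.range j, x i * g i (x i) := by
      rw [Finset.mul_sum]
      apply Finset.sum_le_sum
      intro i hi
      rw [Finset.mem_range] at hi
      have hik : i < kstar := lt_trans hi hjk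
      have hin : i < n := lt_of_lt_of_le hik hk_le_n
      rw [hfull' i hi]
      calc ε * (u i * h i) = u i * (ε * h i) := by ring
        _ ≤ u i * g i (u i) := mul_le_mul_of_nonneg_left (hgeps i hik _) (hu i hin).le
    have w5 : ε * h j * ∑ i ∈ Finset.Ico j n, x i
        ≤ ∑ i ∈ Finset.Ico j n, x i * g i (x i) := by
      rw [Finset.mul_sum]
      apply Finset.sum_le_sum
      intro i hi
      rw [Finset.mem_Ico] at hi
      rcases eq_or_lt_of_le (hx i hi.2).1 with h0 | h0
      · rw [← h0]; simp
      · rw [mul_comm (ε * h j) (x i)]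
        apply mul_le_mul_of_nonneg_left _ h0.le
        calc ε * h j ≤ g j (x j) := hgeps j hjk (x j)
          _ ≤ g i (x i) := hnash i hi.2 j hjn h0 hjlt
    have final : ε * opt ≤ ε * (∑ i ∈ Finset.range j, u i * h i
        + h j * ∑ i ∈ Finset.Ico j n, x i) := mul_le_mul_of_nonneg_left opt_le hε0.le
    have expand : ε * (∑ i ∈ Finset.range j, u i * h i + h j * ∑ i ∈ Finset.Ico j n, x i)
        = ε * ∑ i ∈ Finset.range j, u i * h i
          + ε * h j * ∑ i ∈ Finset.Ico j n, x i := by ring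
    linarith [w1, w4, w5, final, expand]
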